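/- SAT reduction correctness: for every CNF Boolean formula Φ, Φ is satisfiable if and only if (G_Φ, q0) ⊨_subj ⟨⟨1,2,3⟩⟩ X yes, where G_Φ is the three-agent iCGS built from Φ as follows and q0 is any literal state. -/
import Mathlib


/-- An imperfect-information concurrent game structure (iCGS), given as raw data;
the defining axioms are collected in `iCGS.Valid`. -/
structure iCGS (Ag AP S Act : Type) where
  init : S
  indist : Ag → S → S → Prop
  protocol : Ag → S → Set Act
  trans : S → (Ag → Act) → S → Prop
  label : S → Set AP

namespace iCGS

variable {Ag AP S S' Act Act' : Type}

/-- The axioms of an iCGS. -/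
def Valid (G : iCGS Ag AP S Act) : Prop :=
  (∀ i, Equivalence (G.indist i)) ∧
  (∀ i s, (G.protocol i s).Nonempty) ∧
  (∀ i s s', G.indist i s s' → G.protocol i s = G.protocol i s') ∧
  (∀ s a, (∃ s', G.trans s a s') ↔ ∀ i, a i ∈ G.protocol i s)

/-- Common-knowledge reachability for coalition `A`:
reflexive-transitive closure of the union of the `∼ᵢ`, `i ∈ A`. -/
def ck (G : iCGS Ag AP S Act) (A : Set Ag) : S → S → Prop :=
  Relation.ReflTransGen (fun s s' => ∃ i ∈ A, G.indist i s s')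

/-- Common-knowledge neighbourhood `C_A(q)`. -/
def CKN (G : iCGS Ag AP S Act) (A : Set Ag) (q : S) : Set S := {r | G.ck A q r}

/-- "Everybody knows" neighbourhood `E_A(q)`. -/
def EKN (G : iCGS Ag AP S Act) (A : Set Ag) (q : S) : Set S :=
  {r | ∃ i ∈ A, G.indist i q r}

/-- `σ` is a partial uniform strategy for coalition `A` with domain `Q`. -/
def IsPStrat (G : iCGS Ag AP S Act) (A : Set Ag) (Q : Set S) (σ : Ag → S → Act) : Prop :=
  (∀ i ∈ A, ∀ s ∈ Q, σ i s ∈ G.protocol i s) ∧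
  (∀ i ∈ A, ∀ s ∈ Q, ∀ t ∈ Q, G.indist i s t → σ i s = σ i t)

/-- `σ` is a (total) uniform memoryless strategy for coalition `A`. -/
def IsStrat (G : iCGS Ag AP S Act) (A : Set Ag) (σ : Ag → S → Act) : Prop :=
  G.IsPStrat A Set.univ σ

/-- Successors of `s` under joint actions compatible with `σ` on coalition `A`. -/
def succ (G : iCGS Ag AP S Act) (A : Set Ag) (σ : Ag → S → Act) (s : S) : Set S :=
  {t | ∃ a : Ag → Act, (∀ i ∈ A, a i = σ i s) ∧ G.trans s a t}

/-- Objective outcome set of strategy `σ` at `q` (runs as infinite state sequences). -/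
def OutObj (G : iCGS Ag AP S Act) (A : Set Ag) (σ : Ag → S → Act) (q : S) :
    Set (ℕ → S) :=
  {lam | lam 0 = q ∧ ∀ j, lam (j + 1) ∈ G.succ A σ (lam j)}

/-- Subjective outcome set: union of objective outcomes over states indistinguishable
from `q` for some member of the coalition. -/
def OutSubj (G : iCGS Ag AP S Act) (A : Set Ag) (σ : Ag → S → Act) (q : S) :
    Set (ℕ → S) :=
  {lam | ∃ i ∈ A, ∃ r, G.indist i q r ∧ lam ∈ G.OutObj A σ r}

/-- Outcome set: subjective (`x = true`) or objective (`x = false`).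
(For a nonempty coalition the subjective case coincides with the union of
objective outcomes over indistinguishable states, by reflexivity; for the
empty coalition it degenerates to the objective case.) -/
def Out (G : iCGS Ag AP S Act) (x : Bool) (A : Set Ag) (σ : Ag → S → Act) (q : S) :
    Set (ℕ → S) :=
  if x then G.OutObj A σ q ∪ G.OutSubj A σ q else G.OutObj A σ q

/-- `R` is a simulation for coalition `A` from `G` to `G'` (Def. of simulation):
existence of a strategy simulator over common-knowledge neighbourhoods with
(a) atom agreement, (b) epistemic back-condition, (c) strategy transfer, and
(2) injectivity modulo common-knowledge neighbourhoods. -/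
def IsSimulation (G : iCGS Ag AP S Act) (G' : iCGS Ag AP S' Act') (A : Set Ag)
    (R : S → S' → Prop) : Prop :=
  (∃ ST : Set S → Set S' → (Ag → S → Act) → (Ag → S' → Act'),
    ∀ q q', R q q' →
      (∀ σ, G.IsPStrat A (G.CKN A q) σ →
        G'.IsPStrat A (G'.CKN A q') (ST (G.CKN A q) (G'.CKN A q') σ)) ∧
      (∀ r ∈ G.CKN A q, ∀ r' ∈ G'.CKN A q', R r r' →
        ∀ σ, G.IsPStrat A (G.CKN A q) σ →
          ∀ s' ∈ G'.succ A (ST (G.CKN A q) (G'.CKN A q') σ) r',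
            ∃ s ∈ G.succ A σ r, R s s')) ∧
  (∀ q q', R q q' → G.label q = G'.label q') ∧
  (∀ q q', R q q' → ∀ i ∈ A, ∀ r', G'.indist i q' r' →
    ∃ r, G.indist i q r ∧ R r r') ∧
  (∀ q₁ q₂ q', R q₁ q' → R q₂ q' → G.CKN A q₁ = G.CKN A q₂)

/-- `R` is a bisimulation for `A` iff both `R` and its converse are `A`-simulations. -/
def IsBisimulation (G : iCGS Ag AP S Act) (G' : iCGS Ag AP S' Act') (A : Set Ag)
    (R : S → S' → Prop) : Prop :=
  G.IsSimulation G' A R ∧ G'.IsSimulation G A (fun q' q => R q q')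

end iCGS
mutual
/-- State formulas of ATL*. -/
inductive SF (AP Ag : Type) : Type where
  | atom : AP → SF AP Ag
  | neg : SF AP Ag → SF AP Ag
  | imp : SF AP Ag → SF AP Ag → SF AP Ag
  | coal : Set Ag → PF AP Ag → SF AP Ag
/-- Path formulas of ATL*. -/
inductive PF (AP Ag : Type) : Type where
  | of : SF AP Ag → PF AP Ag
  | neg : PF AP Ag → PF AP Ag
  | imp : PF AP Ag → PF AP Ag → PF AP Ag
  | next : PF AP Ag → PF AP Ag
  | untl : PF AP Ag → PF AP Ag → PF AP Ag
end

variable {Ag AP S Act : Type}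

mutual
/-- Satisfaction of ATL* state formulas; `x = true` is the subjective,
`x = false` the objective imperfect-information memoryless semantics. -/
def SSat (G : iCGS Ag AP S Act) (x : Bool) : S → SF AP Ag → Prop
  | s, .atom p => p ∈ G.label s
  | s, .neg φ => ¬ SSat G x s φ
  | s, .imp φ ψ => SSat G x s φ → SSat G x s ψ
  | s, .coal A ψ =>
      ∃ σ, G.IsStrat A σ ∧ ∀ lam ∈ G.Out x A σ s, PSat G x lam ψ
/-- Satisfaction of ATL* path formulas on runs. -/
def PSat (G : iCGS Ag AP S Act) (x : Bool) : (ℕ → S) → PF AP Ag → Prop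
  | lam, .of φ => SSat G x (lam 0) φ
  | lam, .neg ψ => ¬ PSat G x lam ψ
  | lam, .imp ψ χ => PSat G x lam ψ → PSat G x lam χ
  | lam, .next ψ => PSat G x (fun n => lam (n + 1)) ψ
  | lam, .untl ψ χ => ∃ j, PSat G x (fun n => lam (n + j)) χ ∧
      ∀ k < j, PSat G x (fun n => lam (n + k)) ψ
end

mutual
/-- `φ` is an `A`-formula: `A` is the only coalition occurring in it. -/
def SOnly (A : Set Ag) : SF AP Ag → Prop
  | .atom _ => True
  | .neg φ => SOnly A φ
  | .imp φ ψ => SOnly A φ ∧ SOnly A ψ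
  | .coal B ψ => B = A ∧ POnly A ψ
def POnly (A : Set Ag) : PF AP Ag → Prop
  | .of φ => SOnly A φ
  | .neg ψ => POnly A ψ
  | .imp ψ χ => POnly A ψ ∧ POnly A χ
  | .next ψ => POnly A ψ
  | .untl ψ χ => POnly A ψ ∧ POnly A χ
end

/-- CNF formulas: a list of clauses, each clause a list of literals
(variable index together with a polarity). -/
abbrev CNF := List (List (ℕ × Bool))

/-- Satisfiability of a CNF formula. -/
def CNF.Sat (Φ : CNF) : Prop :=
  ∃ v : ℕ → Bool, ∀ c ∈ Φ, ∃ l ∈ c, v l.1 = l.2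

/-- States of the model `G_Φ`: a literal state `inl (c, l)` for the `l`-th literal
of the `c`-th clause, plus `inr true = q_⊤` (labeled `yes`) and `inr false = q_⊥`. -/
abbrev SatS := (ℕ × ℕ) ⊕ Bool

/-- The `l`-th literal of the `c`-th clause of `Φ`. -/
def litAt (Φ : CNF) (c l : ℕ) : ℕ × Bool := (Φ.getD c []).getD l (0, true)

/-- Protocol: agent `0` (the literal picker) chooses a literal index of the current
clause; agent `1` (the valuation picker) chooses a truth value (`0` or `1`);
agent `2` has a single action. -/
def satProt (Φ : CNF) (i : Fin 3) (s : SatS) : Set ℕ :=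
  match s with
  | Sum.inl (c, _) =>
      if i = 0 then {k | k < max 1 (Φ.getD c []).length}
      else if i = 1 then {0, 1} else {0}
  | Sum.inr _ => if i = 1 then {0, 1} else {0}

/-- Indistinguishability: agent `0` is uniform within clauses, agent `1` per
variable, agent `2` links all literal states. -/
def satInd (Φ : CNF) (i : Fin 3) (s t : SatS) : Prop :=
  match s, t with
  | Sum.inl (c, l), Sum.inl (c', l') =>
      if i = 0 then c = c'
      else if i = 1 then (litAt Φ c l).1 = (litAt Φ c' l').1
      else True
  | Sum.inr b, Sum.inr b' => b = b'
  | _, _ => False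

/-- Transition function: at literal state `(c, l)`, if agent `0` picks a wrong
literal index, or picks `l` and agent `1`'s valuation makes the literal true,
go to `q_⊤`; otherwise go to the sink `q_⊥`. `q_⊤` and `q_⊥` are absorbing.
(Out-of-range literal states behave like `q_⊤`-predecessors.) -/
def satDelta (Φ : CNF) (s : SatS) (a : Fin 3 → ℕ) : SatS :=
  match s with
  | Sum.inl (c, l) =>
      if Φ.length ≤ c ∨ (Φ.getD c []).length ≤ l then Sum.inr true
      else if a 0 ≠ l then Sum.inr true
      else if decide (a 1 = 1) = (litAt Φ c l).2 then Sum.inr true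
      else Sum.inr false
  | Sum.inr b => Sum.inr b

/-- The three-agent iCGS `G_Φ` built from a CNF formula `Φ`, with a single atom
`yes` holding exactly at `q_⊤`. -/
def GPhi (Φ : CNF) : iCGS (Fin 3) Unit SatS ℕ where
  init := Sum.inl (0, 0)
  indist := satInd Φ
  protocol := satProt Φ
  trans := fun s a t => (∀ i, a i ∈ satProt Φ i s) ∧ t = satDelta Φ s a
  label := fun s => {_u | s = Sum.inr true}

section AuxiliaryProofMaterial

open Classical in
/-- The winning strategy built from a satisfying valuation `v`. -/
noncomputable def goodStrat (Φ : CNF) (v : ℕ → Bool) : Fin 3 → SatS → ℕ :=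
  fun i s =>
    match s with
    | Sum.inl (c, l) =>
        if i = 0 then
          (if h : ∃ k, k < (Φ.getD c []).length ∧ v (litAt Φ c k).1 = (litAt Φ c k).2
           then h.choose else 0)
        else if i = 1 then (if v (litAt Φ c l).1 then 1 else 0)
        else 0
    | Sum.inr _ => 0

/-- The unique run of a (deterministic) joint strategy from state `r`. -/
def runOf (Φ : CNF) (σ : Fin 3 → SatS → ℕ) (r : SatS) : ℕ → SatS
  | 0 => r
  | n + 1 => satDelta Φ (runOf Φ σ r n) (fun i => σ i (runOf Φ σ r n))

lemma runOf_mem_OutObj (Φ : CNF) (σ : Fin 3 → SatS → ℕ)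
    (hσ : (GPhi Φ).IsStrat Set.univ σ) (r : SatS) :
    runOf Φ σ r ∈ (GPhi Φ).OutObj Set.univ σ r := by
  refine ⟨rfl, fun j => ?_⟩
  refine ⟨fun i => σ i (runOf Φ σ r j), fun i _ => rfl, ?_, rfl⟩
  exact fun i => hσ.1 i trivial _ trivial

lemma goodStrat_isStrat (Φ : CNF) (v : ℕ → Bool) :
    (GPhi Φ).IsStrat Set.univ (goodStrat Φ v) := by
  constructor
  · rintro i - s -
    rcases s with ⟨c, l⟩ | b
    · fin_cases i
      · show (if h : ∃ k, k < (Φ.getD c []).length ∧ v (litAt Φ c k).1 = (litAt Φ c k).2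
            then h.choose else 0) ∈ {k | k < max 1 (Φ.getD c []).length}
        split
        · next h => exact lt_of_lt_of_le h.choose_spec.1 (le_max_right _ _)
        · exact lt_of_lt_of_le Nat.one_pos (le_max_left _ _)
      · show (if v (litAt Φ c l).1 then 1 else 0) ∈ ({0, 1} : Set ℕ)
        split
        · exact Or.inr rfl
        · exact Or.inl rfl
      · show (0 : ℕ) ∈ ({0} : Set ℕ)
        rfl
    · fin_cases i
      · show (0 : ℕ) ∈ ({0} : Set ℕ); rfl
      · show (0 : ℕ) ∈ ({0, 1} : Set ℕ); exact Or.inl rfl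
      · show (0 : ℕ) ∈ ({0} : Set ℕ); rfl
  · rintro i - s - t - hst
    rcases s with ⟨c, l⟩ | b <;> rcases t with ⟨c', l'⟩ | b'
    · simp only [GPhi, satInd] at hst
      fin_cases i
      · obtain rfl : c = c' := by simpa using hst
        rfl
      · have hst' : (litAt Φ c l).1 = (litAt Φ c' l').1 := by simpa using hst
        show (if v (litAt Φ c l).1 then 1 else 0) = (if v (litAt Φ c' l').1 then 1 else 0)
        rw [hst']
      · rfl
    · simp [GPhi, satInd] at hst
    · simp [GPhi, satInd] at hst
    · rfl

lemma delta_goodStrat (Φ : CNF) (v : ℕ → Bool)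
    (hv : ∀ c ∈ Φ, ∃ l ∈ c, v l.1 = l.2) (c l : ℕ) :
    satDelta Φ (Sum.inl (c, l)) (fun i => goodStrat Φ v i (Sum.inl (c, l))) =
      Sum.inr true := by
  rw [satDelta]
  split
  · rfl
  · rename_i hrange
    push_neg at hrange
    obtain ⟨hc, hl⟩ := hrange
    have hmem : Φ.getD c [] ∈ Φ := by
      rw [List.getD_eq_getElem Φ [] hc]; exact List.getElem_mem hc
    obtain ⟨lit, hlit, hvlit⟩ := hv _ hmem
    obtain ⟨k, hk, hkl⟩ := List.mem_iff_getElem.mp hlit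
    have hex : ∃ k, k < (Φ.getD c []).length ∧ v (litAt Φ c k).1 = (litAt Φ c k).2 := by
      refine ⟨k, hk, ?_⟩
      have : litAt Φ c k = lit := by
        rw [litAt, List.getD_eq_getElem _ _ hk, hkl]
      rw [this, hvlit]
    have ha0 : goodStrat Φ v 0 (Sum.inl (c, l)) = hex.choose := by
      show (if h : ∃ k, k < (Φ.getD c []).length ∧ v (litAt Φ c k).1 = (litAt Φ c k).2
            then h.choose else 0) = hex.choose
      rw [dif_pos hex]
    split
    · rfl
    · rename_i h0
      push_neg at h0
      rw [ha0] at h0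
      have hlk := hex.choose_spec.2
      rw [h0] at hlk
      have ha1 : goodStrat Φ v 1 (Sum.inl (c, l)) =
          (if v (litAt Φ c l).1 then 1 else 0) := rfl
      split
      · rfl
      · rename_i hcond
        exfalso
        apply hcond
        rw [ha1]
        rcases hb : v (litAt Φ c l).1 with _ | _ <;> rw [hb] at hlk <;> simp [← hlk]

lemma outObj_next (Φ : CNF) (v : ℕ → Bool)
    (hv : ∀ c ∈ Φ, ∃ l ∈ c, v l.1 = l.2) (lam : ℕ → SatS) (c l : ℕ)
    (h : lam ∈ (GPhi Φ).OutObj Set.univ (goodStrat Φ v) (Sum.inl (c, l))) :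
    lam 1 = Sum.inr true := by
  obtain ⟨h0, hs⟩ := h
  obtain ⟨a, ha, -, hd⟩ := hs 0
  have haeq : a = fun i => goodStrat Φ v i (lam 0) := funext fun i => ha i trivial
  rw [hd, haeq, h0]
  exact delta_goodStrat Φ v hv c l

open Classical in
/-- The valuation extracted from a winning strategy. -/
noncomputable def valOf (Φ : CNF) (σ : Fin 3 → SatS → ℕ) : ℕ → Bool :=
  fun n => if h : ∃ p : ℕ × ℕ, (litAt Φ p.1 p.2).1 = n
    then decide (σ 1 (Sum.inl h.choose) = 1) else true

lemma valOf_eq (Φ : CNF) (σ : Fin 3 → SatS → ℕ)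
    (hσ : (GPhi Φ).IsStrat Set.univ σ) (c l : ℕ) :
    valOf Φ σ (litAt Φ c l).1 = decide (σ 1 (Sum.inl (c, l)) = 1) := by
  have hex : ∃ p : ℕ × ℕ, (litAt Φ p.1 p.2).1 = (litAt Φ c l).1 := ⟨(c, l), rfl⟩
  have hind : satInd Φ 1 (Sum.inl hex.choose) (Sum.inl (c, l)) := by
    show (litAt Φ hex.choose.1 hex.choose.2).1 = (litAt Φ c l).1
    exact hex.choose_spec
  have huni : σ 1 (Sum.inl hex.choose) = σ 1 (Sum.inl (c, l)) :=
    hσ.2 1 trivial _ trivial _ trivial hind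
  simp only [valOf]
  rw [dif_pos hex, huni]

end AuxiliaryProofMaterial

/-- correctness of the SAT reduction: `Φ` is satisfiable iff
`(G_Φ, q₀) ⊨_subj ⟨⟨1,2,3⟩⟩ X yes`, where `q₀` is the first literal state. -/
theorem sat_reduction_correct (Φ : CNF) (hne : Φ ≠ []) (hcl : ∀ c ∈ Φ, c ≠ []) :
    Φ.Sat ↔
    SSat (GPhi Φ) true (Sum.inl (0, 0))
      (SF.coal Set.univ (PF.next (PF.of (SF.atom ())))) := by
  rw [SSat]
  constructor
  · rintro ⟨v, hv⟩
    refine ⟨goodStrat Φ v, goodStrat_isStrat Φ v, fun lam hlam => ?_⟩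
    rw [PSat, PSat, SSat]
    show lam 1 = Sum.inr true
    have hlam' : lam ∈ (GPhi Φ).OutObj Set.univ (goodStrat Φ v) (Sum.inl (0, 0)) ∪
        (GPhi Φ).OutSubj Set.univ (goodStrat Φ v) (Sum.inl (0, 0)) := hlam
    rcases hlam' with h | ⟨i, -, r, hr, h⟩
    · exact outObj_next Φ v hv lam 0 0 h
    · rcases r with ⟨cr, lr⟩ | b
      · exact outObj_next Φ v hv lam cr lr h
      · exact False.elim hr
  · rintro ⟨σ, hσ, hout⟩
    refine ⟨valOf Φ σ, fun ψ hψ => ?_⟩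
    obtain ⟨c, hc, hψc⟩ := List.mem_iff_getElem.mp hψ
    set l := σ 0 (Sum.inl (c, 0)) with hldef
    have hclause : Φ.getD c [] = ψ := by rw [List.getD_eq_getElem Φ [] hc, hψc]
    have hlen : 0 < ψ.length := List.length_pos_iff.mpr (hcl ψ hψ)
    have hllt : l < ψ.length := by
      have h1 : l < max 1 (Φ.getD c []).length := hσ.1 0 trivial (Sum.inl (c, 0)) trivial
      rw [hclause] at h1
      omega
    have huni : σ 0 (Sum.inl (c, l)) = l := by
      refine hσ.2 0 trivial _ trivial _ trivial ?_
      show c = c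
      rfl
    have hmemsubj : runOf Φ σ (Sum.inl (c, l)) ∈
        (GPhi Φ).OutSubj Set.univ σ (Sum.inl (0, 0)) :=
      ⟨2, trivial, Sum.inl (c, l), trivial, runOf_mem_OutObj Φ σ hσ _⟩
    have hsat := hout _ (Or.inr hmemsubj)
    rw [PSat, PSat, SSat] at hsat
    have h1 : satDelta Φ (Sum.inl (c, l)) (fun i => σ i (Sum.inl (c, l))) =
        Sum.inr true := hsat
    rw [satDelta] at h1
    rw [if_neg (by push_neg; exact ⟨hc, by rw [hclause]; exact hllt⟩)] at h1
    rw [if_neg (by simp [huni])] at h1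
    have hkey : decide (σ 1 (Sum.inl (c, l)) = 1) = (litAt Φ c l).2 := by
      by_contra hd
      rw [if_neg hd] at h1
      exact absurd h1 (by simp)
    have hlit : litAt Φ c l = ψ[l] := by
      rw [litAt, hclause, List.getD_eq_getElem _ _ hllt]
    refine ⟨litAt Φ c l, by rw [hlit]; exact List.getElem_mem hllt, ?_⟩
    rw [valOf_eq Φ σ hσ c l, hkey]
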